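/- Let k be a commutative ring, A an associative unital k-algebra, and λ ∈ k. The λ-Hurwitz product on sequences ℕ → A is associative: for all f, g, h : ℕ → A, (f ·^λ g) ·^λ h = f ·^λ (g ·^λ h). -/

import Mathlib

/-- The `lam`-Hurwitz product of sequences in a `k`-algebra `A`:
`(f ·^λ g)(n) = Σ_{r+s+t=n} (n!/(r!s!t!)) · λ^t · f(r+t) · g(s+t)`. -/
def hurwitz {k A : Type*} [CommRing k] [Ring A] [Algebra k A]
    (lam : k) (f g : ℕ → A) : ℕ → A := fun n =>
  ∑ p ∈ Finset.HasAntidiagonal.antidiagonal n, ∑ q ∈ Finset.HasAntidiagonal.antidiagonal p.2,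
    (Nat.factorial n / (Nat.factorial p.1 * Nat.factorial q.1 * Nat.factorial q.2)) •
      lam ^ q.2 • (f (p.1 + q.2) * g (q.1 + q.2))

namespace HurwitzAux

open Finset

/-- The set of triples summing to `n`. -/
def tri (n : ℕ) : Finset (ℕ × ℕ × ℕ) :=
  ((range (n+1)) ×ˢ (range (n+1)) ×ˢ (range (n+1))).filter
    (fun x => x.1 + x.2.1 + x.2.2 = n)

lemma mem_tri {n : ℕ} {x : ℕ × ℕ × ℕ} : x ∈ tri n ↔ x.1 + x.2.1 + x.2.2 = n := by
  simp only [tri, mem_filter, mem_product, mem_range]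
  omega

/-- Binomial-product form of the trinomial coefficient. -/
def cc (n : ℕ) (x : ℕ × ℕ × ℕ) : ℕ := n.choose x.1 * (x.2.1 + x.2.2).choose x.2.1

lemma coeff_eq {n p1 p2 q1 q2 : ℕ} (hp : p1 + p2 = n) (hq : q1 + q2 = p2) :
    Nat.factorial n / (Nat.factorial p1 * Nat.factorial q1 * Nat.factorial q2)
      = n.choose p1 * p2.choose q1 := by
  have h1 : p1 ≤ n := by omega
  have h2 : q1 ≤ p2 := by omega
  have e1 := Nat.choose_mul_factorial_mul_factorial h1
  have e2 := Nat.choose_mul_factorial_mul_factorial h2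
  have hn : n - p1 = p2 := by omega
  have hq2 : p2 - q1 = q2 := by omega
  rw [hn] at e1
  rw [hq2] at e2
  have key : Nat.factorial n
      = n.choose p1 * p2.choose q1 * (Nat.factorial p1 * Nat.factorial q1 * Nat.factorial q2) := by
    calc Nat.factorial n = n.choose p1 * Nat.factorial p1 * Nat.factorial p2 := e1.symm
    _ = n.choose p1 * Nat.factorial p1 * (p2.choose q1 * Nat.factorial q1 * Nat.factorial q2) := by
        rw [e2]
    _ = _ := by ring
  rw [key, Nat.mul_div_cancel _ (by positivity)]

variable {k A : Type*} [CommRing k] [Ring A] [Algebra k A] (lam : k)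

lemma hurwitz_eq_tri (f g : ℕ → A) (n : ℕ) :
    hurwitz lam f g n = ∑ x ∈ tri n,
      cc n x • lam ^ x.2.2 • (f (x.1 + x.2.2) * g (x.2.1 + x.2.2)) := by
  rw [hurwitz]
  rw [Finset.sum_sigma']
  refine Finset.sum_nbij' (fun x => (x.1.1, x.2.1, x.2.2))
    (fun x => ⟨(x.1, x.2.1 + x.2.2), (x.2.1, x.2.2)⟩) ?_ ?_ ?_ ?_ ?_
  · rintro ⟨p, q⟩ hx
    simp only [Finset.mem_sigma, Finset.HasAntidiagonal.mem_antidiagonal] at hx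
    rw [mem_tri]
    dsimp only
    omega
  · intro x hx
    rw [mem_tri] at hx
    simp only [Finset.mem_sigma, Finset.HasAntidiagonal.mem_antidiagonal]
    exact ⟨by omega, trivial⟩
  · rintro ⟨p, q⟩ hx
    simp only [Finset.mem_sigma, Finset.HasAntidiagonal.mem_antidiagonal] at hx
    simp only [Sigma.mk.inj_iff, Prod.mk.injEq]
    constructor
    · exact Prod.ext rfl (by omega)
    · rfl
  · intro x hx
    rfl
  · rintro ⟨p, q⟩ hx
    simp only [Finset.mem_sigma, Finset.HasAntidiagonal.mem_antidiagonal] at hx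
    rw [coeff_eq hx.1 hx.2]
    dsimp only [cc]
    rw [hx.2]

lemma pascal3 {n : ℕ} {x : ℕ × ℕ × ℕ} (hx : x ∈ tri (n+1)) :
    cc (n+1) x = (if x.1 = 0 then 0 else cc n (x.1 - 1, x.2.1, x.2.2))
      + (if x.2.1 = 0 then 0 else cc n (x.1, x.2.1 - 1, x.2.2))
      + (if x.2.2 = 0 then 0 else cc n (x.1, x.2.1, x.2.2 - 1)) := by
  obtain ⟨r, s, t⟩ := x
  rw [mem_tri] at hx
  simp only at hx
  rcases r with _ | a <;> rcases s with _ | b <;> rcases t with _ | c <;>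
    simp only [cc, if_true, if_false, Nat.succ_ne_zero, Nat.add_succ, Nat.succ_add,
      Nat.add_zero, Nat.zero_add, Nat.succ_sub_one, Nat.choose_succ_succ,
      Nat.choose_zero_right, Nat.choose_self, Nat.choose_succ_self, reduceIte, add_zero, zero_add]
  all_goals try omega
  all_goals try ring
  all_goals
    (have ha : a = n := by omega
     subst ha
     simp [Nat.choose_succ_self, Nat.succ_eq_add_one])

lemma shift_sum (σ : ℕ × ℕ × ℕ → ℕ × ℕ × ℕ) (τ : ℕ × ℕ × ℕ → ℕ × ℕ × ℕ)
    (P : ℕ × ℕ × ℕ → Prop) [DecidablePred P]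
    (hστ : ∀ y, τ (σ y) = y)
    (hτσ : ∀ x, ¬ P x → σ (τ x) = x)
    (hPσ : ∀ y, ¬ P (σ y))
    (hsum : ∀ y, (σ y).1 + (σ y).2.1 + (σ y).2.2 = y.1 + y.2.1 + y.2.2 + 1)
    (hsumτ : ∀ x, ¬ P x → (τ x).1 + (τ x).2.1 + (τ x).2.2 + 1 = x.1 + x.2.1 + x.2.2)
    (G : ℕ × ℕ × ℕ → A) (n : ℕ) :
    ∑ x ∈ tri (n+1), (if P x then 0 else cc n (τ x)) • G x
      = ∑ y ∈ tri n, cc n y • G (σ y) := by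
  rw [Finset.sum_congr rfl (fun x _ => by rw [ite_smul, zero_smul]), Finset.sum_ite,
    Finset.sum_const_zero, zero_add]
  refine Finset.sum_nbij' τ σ ?_ ?_ ?_ ?_ ?_
  · intro x hx
    simp only [Finset.mem_filter, mem_tri] at hx
    rw [mem_tri]
    have := hsumτ x hx.2
    omega
  · intro y hy
    rw [mem_tri] at hy
    simp only [Finset.mem_filter, mem_tri]
    refine ⟨by rw [hsum]; omega, hPσ y⟩
  · intro x hx
    simp only [Finset.mem_filter] at hx
    exact hτσ x hx.2
  · intro y _
    exact hστ y
  · intro x hx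
    simp only [Finset.mem_filter] at hx
    rw [hτσ x hx.2]

lemma tri_succ (u : ℕ × ℕ × ℕ → A) (n : ℕ) :
    ∑ x ∈ tri (n+1), cc (n+1) x • u x
      = (∑ y ∈ tri n, cc n y • u (y.1 + 1, y.2.1, y.2.2))
        + (∑ y ∈ tri n, cc n y • u (y.1, y.2.1 + 1, y.2.2))
        + (∑ y ∈ tri n, cc n y • u (y.1, y.2.1, y.2.2 + 1)) := by
  rw [← shift_sum (fun y => (y.1 + 1, y.2.1, y.2.2)) (fun x => (x.1 - 1, x.2.1, x.2.2))
      (fun x => x.1 = 0) (by intro y; rfl) (by rintro ⟨a, b, c⟩ h; simp at h ⊢; omega)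
      (by intro y; simp) (by intro y; simp; omega) (by rintro ⟨a,b,c⟩ h; simp at h ⊢; omega) u n,
    ← shift_sum (fun y => (y.1, y.2.1 + 1, y.2.2)) (fun x => (x.1, x.2.1 - 1, x.2.2))
      (fun x => x.2.1 = 0) (by intro y; rfl) (by rintro ⟨a, b, c⟩ h; simp at h ⊢; omega)
      (by intro y; simp) (by intro y; simp; omega) (by rintro ⟨a,b,c⟩ h; simp at h ⊢; omega) u n,
    ← shift_sum (fun y => (y.1, y.2.1, y.2.2 + 1)) (fun x => (x.1, x.2.1, x.2.2 - 1))
      (fun x => x.2.2 = 0) (by intro y; rfl) (by rintro ⟨a, b, c⟩ h; simp at h ⊢; omega)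
      (by intro y; simp) (by intro y; simp; omega) (by rintro ⟨a,b,c⟩ h; simp at h ⊢; omega) u n,
    ← Finset.sum_add_distrib, ← Finset.sum_add_distrib]
  refine Finset.sum_congr rfl fun x hx => ?_
  rw [pascal3 hx, add_smul, add_smul]

lemma hurwitz_succ (f g : ℕ → A) (n : ℕ) :
    hurwitz lam f g (n+1)
      = hurwitz lam (fun m => f (m+1)) g n + hurwitz lam f (fun m => g (m+1)) n
        + lam • hurwitz lam (fun m => f (m+1)) (fun m => g (m+1)) n := by
  rw [hurwitz_eq_tri, hurwitz_eq_tri, hurwitz_eq_tri, hurwitz_eq_tri,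
    tri_succ (fun x : ℕ × ℕ × ℕ => lam ^ x.2.2 • (f (x.1 + x.2.2) * g (x.2.1 + x.2.2))) n]
  congr 1
  · congr 1
    · refine Finset.sum_congr rfl fun y _ => ?_
      rw [add_right_comm y.1 1 y.2.2]
    · refine Finset.sum_congr rfl fun y _ => ?_
      rw [add_right_comm y.2.1 1 y.2.2]
  · rw [Finset.smul_sum]
    refine Finset.sum_congr rfl fun y _ => ?_
    rw [pow_succ, mul_smul, smul_comm (lam ^ y.2.2) lam, smul_comm (cc n y) lam]
    rfl

lemma hurwitz_add_left (F G g : ℕ → A) (n : ℕ) :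
    hurwitz lam (fun m => F m + G m) g n = hurwitz lam F g n + hurwitz lam G g n := by
  simp [hurwitz, add_mul, smul_add, Finset.sum_add_distrib]

lemma hurwitz_add_right (f G₁ G₂ : ℕ → A) (n : ℕ) :
    hurwitz lam f (fun m => G₁ m + G₂ m) n = hurwitz lam f G₁ n + hurwitz lam f G₂ n := by
  simp [hurwitz, mul_add, smul_add, Finset.sum_add_distrib]

lemma hurwitz_smul_left (F g : ℕ → A) (n : ℕ) :
    hurwitz lam (fun m => lam • F m) g n = lam • hurwitz lam F g n := by
  simp only [hurwitz, Finset.smul_sum]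
  refine Finset.sum_congr rfl fun p _ => Finset.sum_congr rfl fun q _ => ?_
  rw [smul_mul_assoc, smul_comm (lam ^ q.2) lam, smul_comm _ lam]

lemma hurwitz_smul_right (f G : ℕ → A) (n : ℕ) :
    hurwitz lam f (fun m => lam • G m) n = lam • hurwitz lam f G n := by
  simp only [hurwitz, Finset.smul_sum]
  refine Finset.sum_congr rfl fun p _ => Finset.sum_congr rfl fun q _ => ?_
  rw [mul_smul_comm, smul_comm (lam ^ q.2) lam, smul_comm _ lam]

lemma hurwitz_zero (f g : ℕ → A) : hurwitz lam f g 0 = f 0 * g 0 := by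
  simp [hurwitz]

lemma assoc_aux (n : ℕ) : ∀ f g h : ℕ → A,
    hurwitz lam (hurwitz lam f g) h n = hurwitz lam f (hurwitz lam g h) n := by
  induction n with
  | zero =>
    intro f g h
    simp [hurwitz_zero, mul_assoc]
  | succ n ih =>
    intro f g h
    have hfg : (fun m => hurwitz lam f g (m+1))
        = fun m => (fun m' => hurwitz lam (fun j => f (j+1)) g m' + hurwitz lam f (fun j => g (j+1)) m') m
          + lam • hurwitz lam (fun j => f (j+1)) (fun j => g (j+1)) m :=
      funext fun m => by rw [hurwitz_succ]
    have hgh : (fun m => hurwitz lam g h (m+1))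
        = fun m => (fun m' => hurwitz lam (fun j => g (j+1)) h m' + hurwitz lam g (fun j => h (j+1)) m') m
          + lam • hurwitz lam (fun j => g (j+1)) (fun j => h (j+1)) m :=
      funext fun m => by rw [hurwitz_succ]
    rw [hurwitz_succ, hurwitz_succ]
    rw [hfg, hgh]
    rw [hurwitz_add_left, hurwitz_add_left, hurwitz_smul_left,
      hurwitz_add_right, hurwitz_add_right, hurwitz_smul_right,
      hurwitz_add_left, hurwitz_add_left, hurwitz_smul_left,
      hurwitz_add_right, hurwitz_add_right, hurwitz_smul_right]
    simp only [ih]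
    module

end HurwitzAux

/-- the `lam`-Hurwitz product is associative. -/
theorem hurwitz_assoc {k A : Type*} [CommRing k] [Ring A] [Algebra k A] (lam : k)
    (f g h : ℕ → A) :
    hurwitz lam (hurwitz lam f g) h = hurwitz lam f (hurwitz lam g h) := by
  funext n
  exact HurwitzAux.assoc_aux lam n f g h
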